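/- Suppose A_eq ∈ ℝ^{p×n} and A_in ∈ ℝ^{q×n} are entrywise nonnegative, every row of A_eq and of A_in has positive sum, every column of the stacked matrix [A_eq; A_in] has positive sum, and the feasible set {V ∈ ℝ^n : A_eq V = b_eq, A_in V ≤ b_in} is nonempty and bounded. Then the no-cost circuit system admits a solution (V, U_eq, U_in, I_eq, I_in). -/

import Mathlib

set_option maxHeartbeats 1000000

open Matrix Finset


lemma farkas_fin : ∀ (m : ℕ) {n : ℕ} (w : Fin m → Fin n → ℝ) (g : Fin n → ℝ),
    (∀ d : Fin n → ℝ, (∀ i, 0 ≤ w i ⬝ᵥ d) → 0 ≤ g ⬝ᵥ d) →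
    ∃ c : Fin m → ℝ, (∀ i, 0 ≤ c i) ∧ g = ∑ i, c i • w i := by
  intro m
  induction m with
  | zero =>
    intro n w g h
    refine ⟨0, fun i => le_rfl, ?_⟩
    have h0 := h (-g) (fun i => i.elim0)
    have : g ⬝ᵥ (-g) = -(g ⬝ᵥ g) := by simp
    rw [this] at h0
    have hg : g ⬝ᵥ g = 0 := le_antisymm (by linarith) (Finset.sum_nonneg fun j _ => mul_self_nonneg (g j))
    have := (dotProduct_self_eq_zero (v := g)).1 hg
    simp [this]
  | succ m ih =>
    intro n w g h
    by_cases hc : ∀ d : Fin n → ℝ, (∀ i : Fin m, 0 ≤ w i.castSucc ⬝ᵥ d) → 0 ≤ g ⬝ᵥ d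
    · obtain ⟨c, hc0, hg⟩ := ih (fun i => w i.castSucc) g hc
      refine ⟨Fin.snoc c 0, ?_, ?_⟩
      · intro i
        refine Fin.lastCases ?_ (fun i => ?_) i
        · simp
        · simpa using hc0 i
      · rw [Fin.sum_univ_castSucc]
        simpa using hg
    · push_neg at hc
      obtain ⟨d₀, hd₀, hgd₀⟩ := hc
      set wl := w (Fin.last m) with hwl
      have hα : wl ⬝ᵥ d₀ < 0 := by
        by_contra h'
        push_neg at h'
        refine absurd (h d₀ (fun i => ?_)) (not_le.2 hgd₀)
        refine Fin.lastCases h' hd₀ i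
      set α := wl ⬝ᵥ d₀ with hαdef
      have hαne : α ≠ 0 := ne_of_lt hα
      set w' : Fin m → Fin n → ℝ := fun i => w i.castSucc - ((w i.castSucc ⬝ᵥ d₀) / α) • wl with hw'
      set g' : Fin n → ℝ := g - ((g ⬝ᵥ d₀) / α) • wl with hg'
      have key : ∀ u d : Fin n → ℝ,
          (u - ((u ⬝ᵥ d₀) / α) • wl) ⬝ᵥ d = u ⬝ᵥ (d - ((wl ⬝ᵥ d) / α) • d₀) := by
        intro u d
        simp only [sub_dotProduct, dotProduct_sub, smul_dotProduct, dotProduct_smul,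
          smul_eq_mul]
        ring
      have hmain : ∀ d : Fin n → ℝ, (∀ i : Fin m, 0 ≤ w' i ⬝ᵥ d) → 0 ≤ g' ⬝ᵥ d := by
        intro d hd
        set d' := d - ((wl ⬝ᵥ d) / α) • d₀ with hd'
        have h1 : wl ⬝ᵥ d' = 0 := by
          simp only [hd', dotProduct_sub, dotProduct_smul, smul_eq_mul]
          field_simp
          rw [← hαdef]
          ring
        have h2 := h d' (fun i => by
          refine Fin.lastCases (le_of_eq h1.symm) (fun i => ?_) i
          rw [← key]
          exact hd i)
        rw [hg', key]
        exact h2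
      obtain ⟨c, hc0, hgeq⟩ := ih w' g' hmain
      set γ : ℝ := (g ⬝ᵥ d₀ - ∑ i, c i * (w i.castSucc ⬝ᵥ d₀)) / α with hγ
      have hγpos : 0 ≤ γ := by
        have hnum : g ⬝ᵥ d₀ - ∑ i, c i * (w i.castSucc ⬝ᵥ d₀) < 0 := by
          have : 0 ≤ ∑ i, c i * (w i.castSucc ⬝ᵥ d₀) :=
            Finset.sum_nonneg fun i _ => mul_nonneg (hc0 i) (hd₀ i)
          linarith
        have h2 := div_nonneg (neg_nonneg.2 hnum.le) (neg_nonneg.2 hα.le)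
        rwa [neg_div_neg_eq] at h2
      refine ⟨Fin.snoc c γ, ?_, ?_⟩
      · intro i
        refine Fin.lastCases ?_ (fun i => ?_) i
        · simpa using hγpos
        · simpa using hc0 i
      · rw [Fin.sum_univ_castSucc]
        simp only [Fin.snoc_castSucc, Fin.snoc_last]
        have : g = g' + ((g ⬝ᵥ d₀) / α) • wl := by simp [hg']
        rw [this, hgeq, hw']
        have expand : ∑ i : Fin m, c i • (w i.castSucc - ((w i.castSucc ⬝ᵥ d₀) / α) • wl)
            = ∑ i : Fin m, c i • w i.castSucc
              - (∑ i : Fin m, c i * (w i.castSucc ⬝ᵥ d₀) / α) • wl := by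
          simp only [smul_sub, smul_smul]
          rw [Finset.sum_sub_distrib, ← Finset.sum_smul]
          simp only [mul_div_assoc]
        rw [expand]
        rw [hγ]
        rw [← Finset.sum_div]
        ext j
        simp only [Pi.add_apply, Pi.sub_apply, Pi.smul_apply, smul_eq_mul]
        ring
      


lemma farkas_fintype {ι : Type*} [Fintype ι] {n : ℕ} (w : ι → Fin n → ℝ) (g : Fin n → ℝ)
    (h : ∀ d : Fin n → ℝ, (∀ i, 0 ≤ w i ⬝ᵥ d) → 0 ≤ g ⬝ᵥ d) :
    ∃ c : ι → ℝ, (∀ i, 0 ≤ c i) ∧ g = ∑ i, c i • w i := by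
  let e := Fintype.equivFin ι
  obtain ⟨c, hc0, hg⟩ := farkas_fin (Fintype.card ι) (fun k => w (e.symm k)) g
    (fun d hd => h d fun i => by simpa using hd (e i))
  refine ⟨fun i => c (e i), fun i => hc0 _, ?_⟩
  rw [hg, ← e.symm.sum_comp (fun i => c (e i) • w i)]
  simp

/-- A solution of the no-cost circuit system (circuit with no cost sub-circuit). -/
def NoCostCircuitSolution {n p q : ℕ} (Aeq : Matrix (Fin p) (Fin n) ℝ) (beq : Fin p → ℝ)
    (Ain : Matrix (Fin q) (Fin n) ℝ) (bin : Fin q → ℝ)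
    (V : Fin n → ℝ) (Ueq : Fin p → ℝ) (Uin : Fin q → ℝ)
    (Ieq : Fin p → ℝ) (Iin : Fin q → ℝ) : Prop :=
  Aeq.mulVec V = (Matrix.diagonal fun i => ∑ j, Aeq i j).mulVec Ueq + Ieq ∧
  Ain.mulVec V = (Matrix.diagonal fun i => ∑ j, Ain i j).mulVec Uin + Iin ∧
  Aeq.transpose.mulVec Ueq + Ain.transpose.mulVec Uin =
    (Matrix.diagonal fun j => (∑ i, Aeq i j) + (∑ i, Ain i j)).mulVec V ∧
  Aeq.mulVec V = beq ∧
  Ain.mulVec V ≤ bin ∧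
  0 ≤ Iin ∧
  (∀ i, (Ain.mulVec V - bin) i * Iin i = 0)

/-- **Lemma (existence of a solution to a no-cost circuit).** If `A_eq`, `A_in` are
entrywise nonnegative with positive row sums, every column of the stacked matrix
`[A_eq; A_in]` has positive sum, and the feasible set is nonempty and bounded, then the
no-cost circuit system admits a solution. -/
theorem noCost_circuit_has_solution {n p q : ℕ}
    (Aeq : Matrix (Fin p) (Fin n) ℝ) (beq : Fin p → ℝ)
    (Ain : Matrix (Fin q) (Fin n) ℝ) (bin : Fin q → ℝ)
    (hAeq : ∀ i j, 0 ≤ Aeq i j)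
    (hAin : ∀ i j, 0 ≤ Ain i j)
    (hAeqRow : ∀ i, 0 < ∑ j, Aeq i j)
    (hAinRow : ∀ i, 0 < ∑ j, Ain i j)
    (hCol : ∀ j, 0 < (∑ i, Aeq i j) + (∑ i, Ain i j))
    (hfeas : ∃ V : Fin n → ℝ, Aeq.mulVec V = beq ∧ Ain.mulVec V ≤ bin)
    (hbdd : Bornology.IsBounded {V : Fin n → ℝ | Aeq.mulVec V = beq ∧ Ain.mulVec V ≤ bin}) :
    ∃ (V : Fin n → ℝ) (Ueq : Fin p → ℝ) (Uin : Fin q → ℝ) (Ieq : Fin p → ℝ) (Iin : Fin q → ℝ),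
      NoCostCircuitSolution Aeq beq Ain bin V Ueq Uin Ieq Iin := by
  classical
  obtain ⟨V₀, hV₀⟩ := hfeas
  set r : Fin q → ℝ := fun i => ∑ j, Ain i j with hr
  have hrpos : ∀ i, 0 < r i := hAinRow
  set Dc : Fin n → ℝ := fun j => (∑ i, Aeq i j) + (∑ i, Ain i j) with hDc
  set K : Set (Fin n → ℝ) := {V | Aeq.mulVec V = beq ∧ Ain.mulVec V ≤ bin} with hK
  have hcont_eq : Continuous fun V : Fin n → ℝ => Aeq.mulVec V := by
    have hrfl : (fun V : Fin n → ℝ => Aeq.mulVec V) = fun V i => ∑ j, Aeq i j * V j := rfl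
    rw [hrfl]
    exact continuous_pi fun i => continuous_finset_sum _ fun j _ =>
      continuous_const.mul (continuous_apply j)
  have hcont_in : Continuous fun V : Fin n → ℝ => Ain.mulVec V := by
    have hrfl : (fun V : Fin n → ℝ => Ain.mulVec V) = fun V i => ∑ j, Ain i j * V j := rfl
    rw [hrfl]
    exact continuous_pi fun i => continuous_finset_sum _ fun j _ =>
      continuous_const.mul (continuous_apply j)
  have hKne : K.Nonempty := ⟨V₀, hV₀⟩
  have hKcl : IsClosed K := by
    have h1 : IsClosed {V : Fin n → ℝ | Aeq.mulVec V = beq} :=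
      isClosed_eq hcont_eq continuous_const
    have h2 : IsClosed {V : Fin n → ℝ | Ain.mulVec V ≤ bin} := by
      have he : {V : Fin n → ℝ | Ain.mulVec V ≤ bin}
          = ⋂ i, {V : Fin n → ℝ | Ain.mulVec V i ≤ bin i} := by
        ext V; simp [Pi.le_def]
      rw [he]
      exact isClosed_iInter fun i =>
        isClosed_le ((continuous_apply i).comp hcont_in) continuous_const
    exact h1.inter h2
  have hKcompact : IsCompact K := Metric.isCompact_of_isClosed_isBounded hKcl hbdd
  set f : (Fin n → ℝ) → ℝ :=
    fun V => ∑ j, Dc j * V j ^ 2 - ∑ i, (Ain.mulVec V i) ^ 2 / r i with hf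
  have hfcont : Continuous f := by
    apply Continuous.sub
    · exact continuous_finset_sum _ fun j _ =>
        continuous_const.mul ((continuous_apply j).pow 2)
    · exact continuous_finset_sum _ fun i _ =>
        (((continuous_apply i).comp hcont_in).pow 2).div_const (r i)
  obtain ⟨V, hVK, hVmin⟩ := hKcompact.exists_isMinOn hKne hfcont.continuousOn
  obtain ⟨hVeq, hVin⟩ := hVK
  -- generators for Farkas
  set w : (Fin p ⊕ Fin p) ⊕ Fin q → Fin n → ℝ := fun k =>
    Sum.elim (Sum.elim (fun i j => Aeq i j) (fun i j => -Aeq i j))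
      (fun i j => if Ain.mulVec V i = bin i then -Ain i j else 0) k with hw
  set g : Fin n → ℝ := fun j => Dc j * V j - ∑ i, Ain i j * Ain.mulVec V i / r i with hg
  have hfark : ∀ d : Fin n → ℝ, (∀ k, 0 ≤ w k ⬝ᵥ d) → 0 ≤ g ⬝ᵥ d := by
    intro d hd
    have hde : ∀ i, Aeq.mulVec d i = 0 := by
      intro i
      have h1 := hd (Sum.inl (Sum.inl i))
      have h2 := hd (Sum.inl (Sum.inr i))
      simp only [hw, Sum.elim_inl, Sum.elim_inr] at h1 h2
      have e1 : (fun j => Aeq i j) ⬝ᵥ d = Aeq.mulVec d i := rfl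
      have e2 : (fun j => -Aeq i j) ⬝ᵥ d = -(Aeq.mulVec d i) := by
        show (-(Aeq i)) ⬝ᵥ d = _
        rw [neg_dotProduct]
        rfl
      rw [e1] at h1
      rw [e2] at h2
      linarith
    have hdi : ∀ i, Ain.mulVec V i = bin i → Ain.mulVec d i ≤ 0 := by
      intro i hi
      have h3 := hd (Sum.inr i)
      simp only [hw, Sum.elim_inr, if_pos hi] at h3
      have e3 : (fun j => -Ain i j) ⬝ᵥ d = -(Ain.mulVec d i) := by
        show (-(Ain i)) ⬝ᵥ d = _
        rw [neg_dotProduct]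
        rfl
      rw [e3] at h3
      linarith
    set B : ℝ := ∑ j, Dc j * V j * d j - ∑ i, Ain.mulVec V i * Ain.mulVec d i / r i with hB
    have gB : g ⬝ᵥ d = B := by
      have e1 : g ⬝ᵥ d = ∑ j, (Dc j * V j * d j
          - (∑ i, Ain i j * Ain.mulVec V i / r i) * d j) := by
        apply Finset.sum_congr rfl
        intro j _
        show g j * d j = _
        rw [hg]
        ring
      rw [e1, Finset.sum_sub_distrib, hB]
      congr 1
      have e2 : ∑ j, (∑ i, Ain i j * Ain.mulVec V i / r i) * d j
          = ∑ i, ∑ j, Ain i j * Ain.mulVec V i / r i * d j := by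
        simp only [Finset.sum_mul]
        exact Finset.sum_comm
      rw [e2]
      apply Finset.sum_congr rfl
      intro i _
      have e3 : Ain.mulVec d i = ∑ j, Ain i j * d j := rfl
      rw [e3, Finset.mul_sum, Finset.sum_div]
      apply Finset.sum_congr rfl
      intro j _
      ring
    rw [gB]
    by_contra hBneg
    push_neg at hBneg
    set Q : ℝ := ∑ j, Dc j * d j ^ 2 - ∑ i, (Ain.mulVec d i) ^ 2 / r i with hQ
    have hexp : ∀ t : ℝ, f (V + t • d) = f V + 2*t*B + t^2*Q := by
      intro t
      have hadd : ∀ i, Ain.mulVec (V + t • d) i = Ain.mulVec V i + t * Ain.mulVec d i := by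
        intro i
        rw [Matrix.mulVec_add, Matrix.mulVec_smul]
        simp
      rw [hf]
      simp only [hadd, Pi.add_apply, Pi.smul_apply, smul_eq_mul]
      have e1 : ∑ j, Dc j * (V j + t * d j) ^ 2
          = ∑ j, Dc j * V j ^ 2 + 2*t*∑ j, Dc j * V j * d j + t^2 * ∑ j, Dc j * d j ^ 2 := by
        rw [Finset.mul_sum, Finset.mul_sum, ← Finset.sum_add_distrib, ← Finset.sum_add_distrib]
        exact Finset.sum_congr rfl fun j _ => by ring
      have e2 : ∑ i, (Ain.mulVec V i + t * Ain.mulVec d i) ^ 2 / r i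
          = ∑ i, (Ain.mulVec V i) ^ 2 / r i
            + 2*t*∑ i, Ain.mulVec V i * Ain.mulVec d i / r i
            + t^2 * ∑ i, (Ain.mulVec d i) ^ 2 / r i := by
        rw [Finset.mul_sum, Finset.mul_sum, ← Finset.sum_add_distrib, ← Finset.sum_add_distrib]
        exact Finset.sum_congr rfl fun i _ => by ring
      rw [e1, e2, hB, hQ]
      ring
    set s : Finset ℝ := insert 1 (((Finset.univ : Finset (Fin q)).filter
        (fun i => Ain.mulVec V i ≠ bin i)).image
        fun i => (bin i - Ain.mulVec V i) / (|Ain.mulVec d i| + 1)) with hs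
    have hsne : s.Nonempty := ⟨1, Finset.mem_insert_self _ _⟩
    set t1 := s.min' hsne with ht1
    have ht1pos : 0 < t1 := by
      have hm := s.min'_mem hsne
      rw [← ht1] at hm
      rw [hs] at hm
      rcases Finset.mem_insert.1 hm with h1 | h1
      · rw [h1]; norm_num
      · obtain ⟨i, hi, hie⟩ := Finset.mem_image.1 h1
        rw [← hie]
        have hlt : Ain.mulVec V i < bin i :=
          lt_of_le_of_ne (hVin i) (Finset.mem_filter.1 hi).2
        have : (0:ℝ) < |Ain.mulVec d i| + 1 := by positivity
        exact div_pos (by linarith) this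
    set t := min t1 (-B / (|Q| + 1)) with ht
    have htpos : 0 < t := lt_min ht1pos (div_pos (by linarith) (by positivity))
    have hmem : V + t • d ∈ K := by
      constructor
      · rw [Matrix.mulVec_add, Matrix.mulVec_smul]
        have hz : Aeq.mulVec d = 0 := funext hde
        rw [hz]
        simp [hVeq]
      · intro i
        have hval : Ain.mulVec (V + t • d) i = Ain.mulVec V i + t * Ain.mulVec d i := by
          rw [Matrix.mulVec_add, Matrix.mulVec_smul]
          simp
        show Ain.mulVec (V + t • d) i ≤ bin i
        rw [hval]
        by_cases hact : Ain.mulVec V i = bin i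
        · have hdneg := hdi i hact
          nlinarith [htpos.le]
        · have hlt : Ain.mulVec V i < bin i := lt_of_le_of_ne (hVin i) hact
          have hts : t ≤ (bin i - Ain.mulVec V i) / (|Ain.mulVec d i| + 1) := by
            refine le_trans (min_le_left _ _) (s.min'_le _ ?_)
            rw [hs]
            exact Finset.mem_insert_of_mem (Finset.mem_image_of_mem _
              (Finset.mem_filter.2 ⟨Finset.mem_univ i, hact⟩))
          have habs : t * Ain.mulVec d i ≤ t * |Ain.mulVec d i| :=
            mul_le_mul_of_nonneg_left (le_abs_self _) htpos.le
          have h2 : t * (|Ain.mulVec d i| + 1) ≤ bin i - Ain.mulVec V i := by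
            rw [← le_div_iff₀ (by positivity)]
            exact hts
          nlinarith
    have hdec : f (V + t • d) < f V := by
      rw [hexp t]
      have htQ : t * Q ≤ t * (|Q| + 1) :=
        mul_le_mul_of_nonneg_left (by linarith [le_abs_self Q]) htpos.le
      have ht2 : t * (|Q| + 1) ≤ -B := by
        rw [← le_div_iff₀ (by positivity)]
        exact min_le_right _ _
      have hneg : 2*B + t*Q < 0 := by linarith
      nlinarith [mul_pos htpos (neg_pos.2 hneg)]
    exact absurd (hVmin hmem) (not_le.2 hdec)
  obtain ⟨c, hc0, hgsum⟩ := farkas_fintype w g hfark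
  set lam : Fin p → ℝ := fun i => c (Sum.inl (Sum.inl i)) - c (Sum.inl (Sum.inr i)) with hlam
  set mu : Fin q → ℝ := fun i => if Ain.mulVec V i = bin i then c (Sum.inr i) else 0 with hmu
  have hmu0 : ∀ i, 0 ≤ mu i := by
    intro i
    rw [hmu]
    by_cases hact : Ain.mulVec V i = bin i
    · simp only [if_pos hact]
      exact hc0 _
    · simp only [if_neg hact]
      exact le_rfl
  have hgj : ∀ j, Dc j * V j - ∑ i, Ain i j * Ain.mulVec V i / r i
      = ∑ i, Aeq i j * lam i - ∑ i, Ain i j * mu i := by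
    intro j
    have h1 := congrFun hgsum j
    rw [Finset.sum_apply] at h1
    simp only [Pi.smul_apply, smul_eq_mul] at h1
    rw [Fintype.sum_sum_type, Fintype.sum_sum_type] at h1
    simp only [hw, Sum.elim_inl, Sum.elim_inr] at h1
    have hgjv : g j = Dc j * V j - ∑ i, Ain i j * Ain.mulVec V i / r i := by rw [hg]
    rw [hgjv] at h1
    rw [h1]
    have e12 : ∑ i, c (Sum.inl (Sum.inl i)) * Aeq i j
        + ∑ i, c (Sum.inl (Sum.inr i)) * (-Aeq i j)
        = ∑ i, Aeq i j * lam i := by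
      rw [← Finset.sum_add_distrib]
      apply Finset.sum_congr rfl
      intro i _
      rw [hlam]
      ring
    have e3 : ∑ i, c (Sum.inr i) * (if Ain.mulVec V i = bin i then -Ain i j else 0)
        = -∑ i, Ain i j * mu i := by
      rw [← Finset.sum_neg_distrib]
      apply Finset.sum_congr rfl
      intro i _
      rw [hmu]
      by_cases hact : Ain.mulVec V i = bin i
      · simp only [if_pos hact]
        ring
      · simp only [if_neg hact]
        ring
    rw [add_assoc, e3]
    rw [← e12]
    ring
  -- assemble the solution
  set Uin : Fin q → ℝ := fun i => (Ain.mulVec V i - r i * mu i) / r i with hUin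
  set Ieq : Fin p → ℝ := fun i => Aeq.mulVec V i - (∑ j, Aeq i j) * lam i with hIeq
  set Iin : Fin q → ℝ := fun i => r i * mu i with hIin
  refine ⟨V, lam, Uin, Ieq, Iin, ?_, ?_, ?_, hVeq, hVin, ?_, ?_⟩
  · funext i
    rw [Pi.add_apply, Matrix.mulVec_diagonal, hIeq]
    ring
  · funext i
    rw [Pi.add_apply, Matrix.mulVec_diagonal, hUin, hIin]
    field_simp [(hrpos i).ne']
    simp only [hr]
    ring
  · funext j
    rw [Pi.add_apply, Matrix.mulVec_diagonal]
    have ht1' : Aeq.transpose.mulVec lam j = ∑ i, Aeq i j * lam i := rfl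
    have ht2' : Ain.transpose.mulVec Uin j = ∑ i, Ain i j * Uin i := rfl
    rw [ht1', ht2']
    have hUin' : ∀ i, Ain i j * Uin i
        = Ain i j * Ain.mulVec V i / r i - Ain i j * mu i := by
      intro i
      rw [hUin]
      field_simp [(hrpos i).ne']
    rw [Finset.sum_congr rfl fun i _ => hUin' i, Finset.sum_sub_distrib]
    have := hgj j
    show _ = Dc j * V j
    linarith
  · intro i
    show (0 : ℝ) ≤ Iin i
    rw [hIin]
    exact mul_nonneg (hrpos i).le (hmu0 i)
  · intro i
    by_cases hact : Ain.mulVec V i = bin i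
    · rw [Pi.sub_apply, hact]
      ring
    · rw [hIin]
      show (Ain.mulVec V - bin) i * (r i * mu i) = 0
      rw [hmu]
      simp only [if_neg hact]
      ring
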